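/- Equivalence of lossy and standard coverability for k-NRCS: let N be a k-NRCS and define the lossy step relation ⇝ by C ⇝ D iff there exists C₀ with C₀ ≤_is C and C₀ → D. Then for all configurations C, C' of N: C covers C' with respect to the standard step relation → (i.e. there exists C'' with C →* C'' and C' ≤_is C'') if and only if C covers C' with respect to the lossy step relation ⇝. -/

import Mathlib

/-- Finite rooted ordered representation of finite rooted *unordered* labelled trees.
Unorderedness is handled by comparing trees up to permutation of children. -/
inductive STree (Q : Type) : Type
  | node (label : Q) (children : List (STree Q)) : STree Q

namespace STree

variable {Q : Type}

/-- The label of the root. -/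
def rootLabel : STree Q → Q
  | node a _ => a

/-- The children of the root. -/
def children : STree Q → List (STree Q)
  | node _ ts => ts

end STree

mutual
  /-- Number of nodes. -/
  def STree.size {Q : Type} : STree Q → ℕ
    | .node _ ts => 1 + STree.sizeL ts
  /-- Total number of nodes of a list of trees. -/
  def STree.sizeL {Q : Type} : List (STree Q) → ℕ
    | [] => 0
    | t :: ts => STree.size t + STree.sizeL ts
end

mutual
  /-- Height (a single node has height 0). -/
  def STree.height {Q : Type} : STree Q → ℕ
    | .node _ ts => STree.heightL ts
  /-- One plus the maximal height of a list of trees (0 for the empty list). -/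
  def STree.heightL {Q : Type} : List (STree Q) → ℕ
    | [] => 0
    | t :: ts => max (STree.height t + 1) (STree.heightL ts)
end

namespace STree

end STree

mutual
  /-- `TreeLe C C'` is the induced-subtree ordering `C ≤_is C'`: `C` is obtained from `C'`
  by deleting whole subtrees (equivalently, there is a root-preserving, label-preserving
  injection of the nodes of `C` into the nodes of `C'` such that two nodes are adjacent in
  `C` iff their images are adjacent in `C'`). -/
  inductive TreeLe {Q : Type} : STree Q → STree Q → Prop
    | node {a : Q} {ts us : List (STree Q)} :
        ForestLe ts us → TreeLe (.node a ts) (.node a us)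

  /-- An (unordered) embedding of a list of trees into another: an injection matching each
  tree on the left with a distinct tree on the right that dominates it w.r.t. `TreeLe`. -/
  inductive ForestLe {Q : Type} : List (STree Q) → List (STree Q) → Prop
    | nil (us : List (STree Q)) : ForestLe [] us
    | cons {t u : STree Q} {ts us : List (STree Q)} :
        TreeLe t u → ForestLe ts us → ForestLe (t :: ts) (u :: us)
    | skip {u : STree Q} {ts us : List (STree Q)} :
        ForestLe ts us → ForestLe ts (u :: us)
    | permR {ts us us' : List (STree Q)} :
        ForestLe ts us → us.Perm us' → ForestLe ts us'
end

mutual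
  /-- Equality of trees as finite rooted *unordered* labelled trees. -/
  inductive TreeEquiv {Q : Type} : STree Q → STree Q → Prop
    | node {a : Q} {ts us : List (STree Q)} :
        ForestEquiv ts us → TreeEquiv (.node a ts) (.node a us)

  /-- Lists of trees matched bijectively (up to permutation) by `TreeEquiv`. -/
  inductive ForestEquiv {Q : Type} : List (STree Q) → List (STree Q) → Prop
    | nil : ForestEquiv [] []
    | cons {t u : STree Q} {ts us : List (STree Q)} :
        TreeEquiv t u → ForestEquiv ts us → ForestEquiv (t :: ts) (u :: us)
    | permR {ts us us' : List (STree Q)} :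
        ForestEquiv ts us → us.Perm us' → ForestEquiv ts us'
end

/-- `HasPath ps t` : there is a path from the root of `t` (inclusive) whose successive
labels are exactly the (nonempty) list `ps`. -/
inductive HasPath {Q : Type} : List Q → STree Q → Prop
  | single (p : Q) (ts : List (STree Q)) : HasPath [p] (.node p ts)
  | cons (p : Q) {ps : List Q} {ts : List (STree Q)} {t : STree Q} :
      t ∈ ts → HasPath ps t → HasPath (p :: ps) (.node p ts)

/-- `mkChain q qs` is the path-shaped tree with labels `q, qs...`. -/
def mkChain {Q : Type} : Q → List Q → STree Q
  | q, [] => .node q []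
  | q, r :: rest => .node q [mkChain r rest]

/-- Attach the (possibly empty) fresh chain labelled `qs` as a new child. -/
def attachChain {Q : Type} : List Q → List (STree Q) → List (STree Q)
  | [], ts => ts
  | r :: rest, ts => mkChain r rest :: ts

/-- Application of an update transition `(p_0,…,p_i) →u (q_0,…,q_j)` (given as the two label
lists) to a configuration: fire along a root path labelled `p_0,…,p_i`, relabel the common
prefix, and either create fresh nodes labelled `q_{i+1},…,q_j` (if `i ≤ j`) or delete the
subtree rooted at `v_{j+1}` (if `j < i`). -/
inductive UStep {Q : Type} : List Q → List Q → STree Q → STree Q → Prop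
  | last (p q : Q) (rest : List Q) (ts : List (STree Q)) :
      UStep [p] (q :: rest) (.node p ts) (.node q (attachChain rest ts))
  | delete (p q : Q) {ps : List Q} (hps : ps ≠ []) {t : STree Q} (l r : List (STree Q)) :
      HasPath ps t →
      UStep (p :: ps) [q] (.node p (l ++ t :: r)) (.node q (l ++ r))
  | go (p q : Q) {ps qs : List Q} (hps : ps ≠ []) (hqs : qs ≠ []) {t t' : STree Q}
      (l r : List (STree Q)) :
      UStep ps qs t t' →
      UStep (p :: ps) (q :: qs) (.node p (l ++ t :: r)) (.node q (l ++ t' :: r))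

/-- Application of a reset transition `(p_0,…,p_i) →r,x (q_0,…,q_i)` to a configuration:
fire along a root path labelled `p_0,…,p_i`, relabel it to `q_0,…,q_i`, and delete every
subtree rooted at a child of the last path node whose label is `x`. -/
inductive RStep {Q : Type} [DecidableEq Q] : List Q → Q → List Q → STree Q → STree Q → Prop
  | last (p q x : Q) (ts : List (STree Q)) :
      RStep [p] x [q] (.node p ts) (.node q (ts.filter (fun t => t.rootLabel ≠ x)))
  | go (p q x : Q) {ps qs : List Q} (hps : ps ≠ []) {t t' : STree Q} (l r : List (STree Q)) :
      RStep ps x qs t t' →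
      RStep (p :: ps) x (q :: qs) (.node p (l ++ t :: r)) (.node q (l ++ t' :: r))

/-- A transition of a `k`-NRCS : either an update transition or a reset transition,
presented by its label lists. -/
inductive NTrans (Q : Type) : Type
  | upd (ps qs : List Q) : NTrans Q
  | rst (ps : List Q) (x : Q) (qs : List Q) : NTrans Q

/-- A `k`-NRCS `(Q, δ_u, δ_r)` : a finite set of update transitions
`δ_u ⊆ ⋃_{1 ≤ i,j ≤ k+1} Q^i × Q^j` and a finite set of reset transitions
`δ_r ⊆ ⋃_{1 ≤ i ≤ k} Q^i × Q × Q^i` (the state set is the ambient type `Q`). -/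
structure NRCS (Q : Type) [DecidableEq Q] (k : ℕ) where
  update : Finset (List Q × List Q)
  reset : Finset (List Q × Q × List Q)
  update_wf : ∀ t ∈ update, 1 ≤ t.1.length ∧ t.1.length ≤ k + 1 ∧
      1 ≤ t.2.length ∧ t.2.length ≤ k + 1
  reset_wf : ∀ t ∈ reset, 1 ≤ t.1.length ∧ t.1.length ≤ k ∧ t.2.2.length = t.1.length

namespace NRCS

variable {Q : Type} [DecidableEq Q] {k : ℕ}

/-- Membership of a transition in an NRCS. -/
def hasTrans (N : NRCS Q k) : NTrans Q → Prop
  | .upd ps qs => (ps, qs) ∈ N.update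
  | .rst ps x qs => (ps, x, qs) ∈ N.reset

/-- `C →_t C'` : a step via the particular transition `t`. -/
def TransStep : NTrans Q → STree Q → STree Q → Prop
  | .upd ps qs, C, C' => UStep ps qs C C'
  | .rst ps x qs, C, C' => RStep ps x qs C C'

/-- The step relation `C → C'` of the NRCS `N`. -/
def Step (N : NRCS Q k) (C C' : STree Q) : Prop :=
  ∃ t : NTrans Q, N.hasTrans t ∧ TransStep t C C'

/-- Reachability `C →* C'` (reflexive-transitive closure of the step relation). -/
def Reaches (N : NRCS Q k) : STree Q → STree Q → Prop :=
  Relation.ReflTransGen N.Step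

/-- The lossy step relation: first delete some whole subtrees, then take a standard step. -/
def LossyStep (N : NRCS Q k) (C D : STree Q) : Prop :=
  ∃ C₀ : STree Q, TreeLe C₀ C ∧ N.Step C₀ D

/-- Lossy reachability. -/
def LossyReaches (N : NRCS Q k) : STree Q → STree Q → Prop :=
  Relation.ReflTransGen N.LossyStep

end NRCS

section Aux
variable {Q : Type}

open List

/-- Subperm + Forall₂ characterization of `ForestLe`. -/
def FLE (ts us : List (STree Q)) : Prop :=
  ∃ us₁, List.Forall₂ TreeLe ts us₁ ∧ us₁ <+~ us

theorem fle_of_forestLe {ts us : List (STree Q)} (h : ForestLe ts us) : FLE ts us := by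
  refine ForestLe.rec (motive_1 := fun _ _ _ => True)
    (motive_2 := fun ts us _ => FLE ts us) ?_ ?_ ?_ ?_ ?_ h
  · intro _ _ _ _ _; trivial
  · intro us; exact ⟨[], .nil, List.nil_subperm⟩
  · intro t u ts us h1 _ _ ih
    obtain ⟨us₁, hf, hsp⟩ := ih
    exact ⟨u :: us₁, .cons h1 hf, (List.subperm_cons u).mpr hsp⟩
  · intro u ts us _ ih
    obtain ⟨us₁, hf, hsp⟩ := ih
    exact ⟨us₁, hf, hsp.trans (List.sublist_cons_self u us).subperm⟩
  · intro ts us us' _ hp ih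
    obtain ⟨us₁, hf, hsp⟩ := ih
    exact ⟨us₁, hf, hsp.trans hp.subperm⟩

theorem forestLe_of_forall₂ : ∀ {ts us : List (STree Q)},
    List.Forall₂ TreeLe ts us → ForestLe ts us := by
  intro ts us h
  induction h with
  | nil => exact .nil []
  | cons h1 _ ih => exact .cons h1 ih

theorem forestLe_cons_inv {t : STree Q} {ts vs : List (STree Q)}
    (h : ForestLe (t :: ts) vs) :
    ∃ v vs', vs ~ v :: vs' ∧ TreeLe t v ∧ ForestLe ts vs' := by
  refine ForestLe.rec (motive_1 := fun _ _ _ => True)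
    (motive_2 := fun xs vs _ => ∀ t ts, xs = t :: ts →
      ∃ v vs', vs ~ v :: vs' ∧ TreeLe t v ∧ ForestLe ts vs') ?_ ?_ ?_ ?_ ?_ h t ts rfl
  · intro _ _ _ _ _; trivial
  · intro us t ts h; cases h
  · intro t u ts us h1 h2 _ _ t' ts' he
    cases he
    exact ⟨u, us, List.Perm.refl _, h1, h2⟩
  · intro u ts us _ ih t' ts' he
    obtain ⟨v, vs', hp, h1, h2⟩ := ih t' ts' he
    exact ⟨v, u :: vs', ((hp.cons u).trans (List.Perm.swap v u vs')), h1, .skip h2⟩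
  · intro ts us us' _ hp ih t' ts' he
    obtain ⟨v, vs', hp', h1, h2⟩ := ih t' ts' he
    exact ⟨v, vs', hp.symm.trans hp', h1, h2⟩

theorem forestLe_subperm : ∀ {ts l us : List (STree Q)},
    ForestLe ts l → l <+~ us → ForestLe ts us := by
  intro ts
  induction ts with
  | nil => intro l us _ _; exact .nil us
  | cons t ts ih =>
    intro l us h hsp
    obtain ⟨v, l', hperm, h1, h2⟩ := forestLe_cons_inv h
    have hsp' : v :: l' <+~ us := (hperm.symm.subperm).trans hsp
    have hv : v ∈ us := hsp'.subset (List.mem_cons_self (a := v) (l := l'))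
    obtain ⟨s, r, rfl⟩ := List.append_of_mem hv
    have hsp'' : l' <+~ s ++ r :=
      (List.subperm_cons v).mp (hsp'.trans List.perm_middle.subperm)
    exact ForestLe.permR (ForestLe.cons h1 (ih h2 hsp'')) List.perm_middle.symm

theorem forestLe_of_fle {ts us : List (STree Q)} (h : FLE ts us) : ForestLe ts us := by
  obtain ⟨us₁, hf, hsp⟩ := h
  exact forestLe_subperm (forestLe_of_forall₂ hf) hsp

theorem size_le_of_mem {t : STree Q} : ∀ {ts : List (STree Q)}, t ∈ ts →
    STree.size t ≤ STree.sizeL ts := by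
  intro ts h
  induction ts with
  | nil => cases h
  | cons s ts ih =>
    rw [STree.sizeL]
    rcases List.mem_cons.mp h with rfl | h
    · exact Nat.le_add_right _ _
    · exact le_add_of_nonneg_of_le (Nat.zero_le _) (ih h)

theorem size_lt_of_mem {t : STree Q} {ts : List (STree Q)} (h : t ∈ ts) :
    STree.size t < 1 + STree.sizeL ts := by
  have := size_le_of_mem h; omega

theorem treeLe_refl_aux : ∀ (n : ℕ) (t : STree Q), t.size ≤ n → TreeLe t t := by
  intro n
  induction n with
  | zero => intro t h; cases t with | node a ts => rw [STree.size] at h; omega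
  | succ n ih =>
    intro t h
    cases t with
    | node a ts =>
      rw [STree.size] at h
      refine TreeLe.node (forestLe_of_fle ⟨ts, ?_, List.Subperm.refl ts⟩)
      refine List.forall₂_same.mpr fun t ht => ih t ?_
      have h1 := size_lt_of_mem ht
      omega

theorem treeLe_refl (t : STree Q) : TreeLe t t := treeLe_refl_aux t.size t le_rfl

theorem forestLe_refl (ts : List (STree Q)) : ForestLe ts ts :=
  forestLe_of_fle ⟨ts, List.forall₂_same.mpr fun t _ => treeLe_refl t, List.Subperm.refl ts⟩

theorem forall₂_sublist {α β : Type*} {R : α → β → Prop} :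
    ∀ {us' us : List α}, us' <+ us → ∀ {vs : List β}, List.Forall₂ R us vs →
      ∃ vs', vs' <+ vs ∧ List.Forall₂ R us' vs' := by
  intro us' us h
  induction h with
  | slnil => intro vs _; exact ⟨[], List.nil_sublist vs, .nil⟩
  | cons a h ih =>
    intro vs hf
    cases hf with
    | cons hab hf =>
      obtain ⟨vs', h1, h2⟩ := ih hf
      exact ⟨vs', h1.trans (List.sublist_cons_self _ _), h2⟩
  | cons_cons a h ih =>
    intro vs hf
    cases hf with
    | cons hab hf =>
      obtain ⟨vs', h1, h2⟩ := ih hf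
      exact ⟨_ :: vs', h1.cons₂ _, .cons hab h2⟩

theorem forall₂_perm {α β : Type*} {R : α → β → Prop} :
    ∀ {us l : List α}, us ~ l → ∀ {vs : List β}, List.Forall₂ R us vs →
      ∃ w, vs ~ w ∧ List.Forall₂ R l w := by
  intro us l hp
  induction hp with
  | nil => intro vs hf; exact ⟨vs, List.Perm.refl vs, hf⟩
  | cons x _ ih =>
    intro vs hf
    cases hf with
    | cons hab hf =>
      obtain ⟨w, h1, h2⟩ := ih hf
      exact ⟨_ :: w, h1.cons _, .cons hab h2⟩
  | swap x y l =>
    intro vs hf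
    cases hf with
    | cons h1 hf =>
      cases hf with
      | cons h2 hf =>
        exact ⟨_ :: _ :: _, List.Perm.swap _ _ _, .cons h2 (.cons h1 hf)⟩
  | trans _ _ ih1 ih2 =>
    intro vs hf
    obtain ⟨w, h1, h2⟩ := ih1 hf
    obtain ⟨w', h1', h2'⟩ := ih2 h2
    exact ⟨w', h1.trans h1', h2'⟩

theorem forall₂_comp {α : Type*} {R : α → α → Prop} :
    ∀ {ts us : List α}, List.Forall₂ R ts us →
      (∀ a ∈ ts, ∀ b c, R a b → R b c → R a c) →
      ∀ {vs}, List.Forall₂ R us vs → List.Forall₂ R ts vs := by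
  intro ts us h
  induction h with
  | nil => intro _ vs hf; cases hf; exact .nil
  | @cons t u ts us hab hrest ih =>
    intro htrans vs hf
    cases hf with
    | cons hbc hf =>
      exact .cons (htrans t (List.mem_cons_self) _ _ hab hbc)
        (ih (fun a ha => htrans a (List.mem_cons_of_mem _ ha)) hf)

theorem treeLe_trans_aux : ∀ (n : ℕ) (a b c : STree Q), a.size ≤ n →
    TreeLe a b → TreeLe b c → TreeLe a c := by
  intro n
  induction n with
  | zero => intro a _ _ h; cases a with | node x ts => rw [STree.size] at h; omega
  | succ n ih =>
    intro a b c hsz hab hbc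
    cases hab with
    | @node x ts us h1 =>
      rw [STree.size] at hsz
      cases hbc with
      | @node _ _ vs h2 =>
        refine TreeLe.node (forestLe_of_fle ?_)
        obtain ⟨us₁, f1, ⟨l, hl1, hl2⟩⟩ := fle_of_forestLe h1
        obtain ⟨vs₁, f2, sp2⟩ := fle_of_forestLe h2
        obtain ⟨w, hw1, hw2⟩ := forall₂_sublist hl2 f2
        obtain ⟨w', hw1', hw2'⟩ := forall₂_perm hl1 hw2
        refine ⟨w', forall₂_comp f1 ?_ hw2', ?_⟩
        · intro t ht b' c' h1' h2'
          have := size_lt_of_mem ht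
          exact ih t b' c' (by omega) h1' h2'
        · exact List.Subperm.trans ⟨w, hw1', hw1⟩ sp2

theorem treeLe_trans {a b c : STree Q} (h1 : TreeLe a b) (h2 : TreeLe b c) : TreeLe a c :=
  treeLe_trans_aux a.size a b c le_rfl h1 h2

end Aux

section Aux2
variable {Q : Type}
open List

theorem forall₂_append_split {α β : Type*} {R : α → β → Prop} :
    ∀ {l : List α} {x : α} {r : List α} {us₁ : List β}, List.Forall₂ R (l ++ x :: r) us₁ →
      ∃ w₁ u w₂, us₁ = w₁ ++ u :: w₂ ∧ List.Forall₂ R l w₁ ∧ R x u ∧ List.Forall₂ R r w₂ := by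
  intro l
  induction l with
  | nil =>
    intro x r us₁ h
    cases h with
    | cons h1 h2 => exact ⟨[], _, _, rfl, .nil, h1, h2⟩
  | cons a l ih =>
    intro x r us₁ h
    cases h with
    | cons h1 h2 =>
      obtain ⟨w₁, u, w₂, rfl, f1, f2, f3⟩ := ih h2
      exact ⟨_ :: w₁, u, w₂, rfl, .cons h1 f1, f2, f3⟩

theorem forestLe_decomp {l r us : List (STree Q)} {t : STree Q}
    (h : ForestLe (l ++ t :: r) us) :
    ∃ l'' r'' u, us = l'' ++ u :: r'' ∧ TreeLe t u ∧
      ForestLe (l ++ r) (l'' ++ r'') ∧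
      ∀ x y : STree Q, TreeLe x y → ForestLe (l ++ x :: r) (l'' ++ y :: r'') := by
  obtain ⟨us₁, f, sp⟩ := fle_of_forestLe h
  obtain ⟨w₁, u, w₂, rfl, f1, f2, f3⟩ := forall₂_append_split f
  have hu : u ∈ us := sp.subset (List.mem_append_right w₁ (List.mem_cons_self (a := u) (l := w₂)))
  obtain ⟨l'', r'', rfl⟩ := List.append_of_mem hu
  have key : w₁ ++ w₂ <+~ l'' ++ r'' := by
    refine (List.subperm_cons u).mp ?_
    exact (List.perm_middle.symm.subperm).trans (sp.trans List.perm_middle.subperm)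
  refine ⟨l'', r'', u, rfl, f2, forestLe_of_fle ⟨w₁ ++ w₂, List.rel_append f1 f3, key⟩, ?_⟩
  intro x y hxy
  refine forestLe_of_fle ⟨w₁ ++ y :: w₂, List.rel_append f1 (.cons hxy f3), ?_⟩
  exact (List.perm_middle.subperm).trans
    (((List.subperm_cons y).mpr key).trans List.perm_middle.symm.subperm)

theorem forall₂_mem_left {α β : Type*} {R : α → β → Prop} :
    ∀ {ts : List α} {us : List β}, List.Forall₂ R ts us → ∀ {t}, t ∈ ts →
      ∃ u ∈ us, R t u := by
  intro ts us h
  induction h with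
  | nil => intro t ht; cases ht
  | @cons a b ts us hab _ ih =>
    intro t ht
    rcases List.mem_cons.mp ht with rfl | ht
    · exact ⟨b, List.mem_cons_self (a := b) (l := us), hab⟩
    · obtain ⟨u, hu, h⟩ := ih ht
      exact ⟨u, List.mem_cons_of_mem b hu, h⟩

theorem forestLe_mem {ts us : List (STree Q)} (h : ForestLe ts us) {t} (ht : t ∈ ts) :
    ∃ u ∈ us, TreeLe t u := by
  obtain ⟨us₁, f, sp⟩ := fle_of_forestLe h
  obtain ⟨u, hu, hle⟩ := forall₂_mem_left f ht
  exact ⟨u, sp.subset hu, hle⟩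

theorem hasPath_mono : ∀ {ps : List Q} {t u : STree Q}, TreeLe t u → HasPath ps t →
    HasPath ps u := by
  intro ps t u hle hp
  induction hp generalizing u with
  | single p ts =>
    cases hle with
    | node h => exact .single ..
  | @cons p ps ts t₀ hmem hp ih =>
    cases hle with
    | @node _ _ us h =>
      obtain ⟨u₀, hu₀, hle₀⟩ := forestLe_mem h hmem
      exact .cons p hu₀ (ih hle₀)

theorem forestLe_attach (rest : List Q) {ts us : List (STree Q)} (h : ForestLe ts us) :
    ForestLe (attachChain rest ts) (attachChain rest us) := by
  cases rest with
  | nil => exact h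
  | cons r rest => exact .cons (treeLe_refl _) h

theorem treeLe_rootLabel {t u : STree Q} (h : TreeLe t u) : t.rootLabel = u.rootLabel := by
  cases h; rfl

theorem forall₂_filter {α : Type*} {R : α → α → Prop} (p : α → Bool)
    (hp : ∀ a b, R a b → p a = p b) :
    ∀ {ts us : List α}, List.Forall₂ R ts us →
      List.Forall₂ R (ts.filter p) (us.filter p) := by
  intro ts us h
  induction h with
  | nil => exact .nil
  | @cons a b ts us hab _ ih =>
    have hb := hp a b hab
    cases hpa : p a with
    | false =>
      rw [List.filter_cons_of_neg (by simp [hpa]), List.filter_cons_of_neg (by simp [← hb, hpa])]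
      exact ih
    | true =>
      rw [List.filter_cons_of_pos (by simp [hpa]), List.filter_cons_of_pos (by simp [← hb, hpa])]
      exact .cons hab ih

theorem forestLe_filter [DecidableEq Q] (x : Q) {ts us : List (STree Q)} (h : ForestLe ts us) :
    ForestLe (ts.filter fun t => t.rootLabel ≠ x) (us.filter fun t => t.rootLabel ≠ x) := by
  obtain ⟨us₁, f, sp⟩ := fle_of_forestLe h
  refine forestLe_of_fle ⟨us₁.filter fun t => t.rootLabel ≠ x, ?_, sp.filter _⟩
  exact forall₂_filter _ (fun a b hab => by simp [treeLe_rootLabel hab]) f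

theorem ustep_mono : ∀ {ps qs : List Q} {C₀ D : STree Q}, UStep ps qs C₀ D →
    ∀ {C}, TreeLe C₀ C → ∃ D', UStep ps qs C D' ∧ TreeLe D D' := by
  intro ps qs C₀ D h
  induction h with
  | last p q rest ts =>
    intro C hle
    cases hle with
    | @node _ _ us hf =>
      exact ⟨.node q (attachChain rest us), .last p q rest us,
        .node (forestLe_attach rest hf)⟩
  | @delete p q ps hps t l r hpath =>
    intro C hle
    cases hle with
    | @node _ _ us hf =>
      obtain ⟨l'', r'', u, rfl, hle', hforest, _⟩ := forestLe_decomp hf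
      exact ⟨.node q (l'' ++ r''), .delete p q hps l'' r'' (hasPath_mono hle' hpath),
        .node hforest⟩
  | @go p q ps qs hps hqs t t' l r hstep ih =>
    intro C hle
    cases hle with
    | @node _ _ us hf =>
      obtain ⟨l'', r'', u, rfl, hle', _, hall⟩ := forestLe_decomp hf
      obtain ⟨u', hstep', hle''⟩ := ih hle'
      exact ⟨.node q (l'' ++ u' :: r''), .go p q hps hqs l'' r'' hstep',
        .node (hall t' u' hle'')⟩

theorem rstep_mono [DecidableEq Q] : ∀ {ps : List Q} {x : Q} {qs : List Q} {C₀ D : STree Q},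
    RStep ps x qs C₀ D → ∀ {C}, TreeLe C₀ C → ∃ D', RStep ps x qs C D' ∧ TreeLe D D' := by
  intro ps x qs C₀ D h
  induction h with
  | last p q x ts =>
    intro C hle
    cases hle with
    | @node _ _ us hf =>
      exact ⟨.node q (us.filter fun t => t.rootLabel ≠ x), .last p q x us,
        .node (forestLe_filter x hf)⟩
  | @go p q x ps qs hps t t' l r hstep ih =>
    intro C hle
    cases hle with
    | @node _ _ us hf =>
      obtain ⟨l'', r'', u, rfl, hle', _, hall⟩ := forestLe_decomp hf
      obtain ⟨u', hstep', hle''⟩ := ih hle'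
      exact ⟨.node q (l'' ++ u' :: r''), .go p q x hps l'' r'' hstep',
        .node (hall t' u' hle'')⟩

theorem step_mono [DecidableEq Q] {k : ℕ} {N : NRCS Q k} {C₀ C D : STree Q}
    (hle : TreeLe C₀ C) (h : N.Step C₀ D) : ∃ D', N.Step C D' ∧ TreeLe D D' := by
  obtain ⟨t, ht, hstep⟩ := h
  cases t with
  | upd ps qs =>
    obtain ⟨D', h1, h2⟩ := ustep_mono hstep hle
    exact ⟨D', ⟨.upd ps qs, ht, h1⟩, h2⟩
  | rst ps x qs =>
    obtain ⟨D', h1, h2⟩ := rstep_mono hstep hle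
    exact ⟨D', ⟨.rst ps x qs, ht, h1⟩, h2⟩

end Aux2

/-- Equivalence of lossy and standard coverability for `k`-NRCS:
let `N` be a `k`-NRCS and define the lossy step relation `⇝` by `C ⇝ D` iff there exists
`C₀` with `C₀ ≤_is C` and `C₀ → D`. Then for all configurations `C, C'` of `N`:
`C` covers `C'` w.r.t. the standard step relation (there exists `C''` with `C →* C''` and
`C' ≤_is C''`) iff `C` covers `C'` w.r.t. the lossy step relation. -/
theorem nrcs_lossy_coverability_iff
    {Q : Type} [DecidableEq Q] [Fintype Q] {k : ℕ} (hk : 1 ≤ k)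
    (N : NRCS Q k) (C C' : STree Q) (hC : C.height ≤ k) (hC' : C'.height ≤ k) :
    (∃ C'' : STree Q, N.Reaches C C'' ∧ TreeLe C' C'') ↔
    (∃ C'' : STree Q, N.LossyReaches C C'' ∧ TreeLe C' C'') := by
  constructor
  · rintro ⟨C'', h1, h2⟩
    exact ⟨C'', Relation.ReflTransGen.mono (p := N.LossyStep)
      (fun a b h => ⟨a, treeLe_refl a, h⟩) C C'' h1, h2⟩
  · rintro ⟨C'', h1, h2⟩
    have key : ∀ {D : STree Q}, N.LossyReaches C D →
        ∃ D', N.Reaches C D' ∧ TreeLe D D' := by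
      intro D h
      induction h with
      | refl => exact ⟨C, Relation.ReflTransGen.refl, treeLe_refl C⟩
      | tail hreach hstep ih =>
        obtain ⟨D', hr, hle⟩ := ih
        obtain ⟨C₀, hle₀, hstep₀⟩ := hstep
        obtain ⟨E', h3, h4⟩ := step_mono (treeLe_trans hle₀ hle) hstep₀
        exact ⟨E', hr.tail h3, h4⟩
    obtain ⟨D', hr, hle⟩ := key h1
    exact ⟨D', hr, treeLe_trans h2 hle⟩
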